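/- Let a, b ∈ ℝ and let I, J ⊆ ℝ be open intervals such that 1 + a·e^{2x} > 0 for all x ∈ I and 1 + b·e^{2y} > 0 for all y ∈ J. Let w : I × J → ℝ be differentiable with ∂w/∂x = w + √((1 + b·e^{2y})/(1 + a·e^{2x})) and ∂w/∂y = w + √((1 + a·e^{2x})/(1 + b·e^{2y})) at every (x,y) ∈ I × J. Then there exists a constant η ∈ ℝ such that w(x,y) = −√((1 + a·e^{2x})(1 + b·e^{2y})) + η·e^{x+y} for all (x,y) ∈ I × J. -/

import Mathlib

/-- Derivative of `t ↦ √(1 + c e^{2t})` at a point where `1 + c e^{2t} > 0`. -/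
lemma hasDerivAt_sqrt_one_add_exp (c x : ℝ) (h : 0 < 1 + c * Real.exp (2 * x)) :
    HasDerivAt (fun t => Real.sqrt (1 + c * Real.exp (2 * t)))
      (c * Real.exp (2 * x) / Real.sqrt (1 + c * Real.exp (2 * x))) x := by
  have h2 : HasDerivAt (fun t : ℝ => 2 * t) 2 x := by
    simpa using (hasDerivAt_id x).const_mul 2
  have hexp : HasDerivAt (fun t => Real.exp (2 * t)) (Real.exp (2 * x) * 2) x := by
    exact (Real.hasDerivAt_exp (2 * x)).comp x h2
  have hinner : HasDerivAt (fun t => 1 + c * Real.exp (2 * t))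
      (c * (Real.exp (2 * x) * 2)) x := (hexp.const_mul c).const_add 1
  have : HasDerivAt (fun t => Real.sqrt (1 + c * Real.exp (2 * t)))
      (1 / (2 * Real.sqrt (1 + c * Real.exp (2 * x))) * (c * (Real.exp (2 * x) * 2))) x :=
    (Real.hasDerivAt_sqrt h.ne').comp x hinner
  convert this using 1
  have hs : Real.sqrt (1 + c * Real.exp (2 * x)) ≠ 0 :=
    (Real.sqrt_pos.mpr h).ne'
  field_simp

theorem linear_system_sqrt_neg (a b : ℝ) (I J : Set ℝ)
    (hIopen : IsOpen I) (hIconn : I.OrdConnected)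
    (hJopen : IsOpen J) (hJconn : J.OrdConnected)
    (ha : ∀ x ∈ I, 0 < 1 + a * Real.exp (2 * x))
    (hb : ∀ y ∈ J, 0 < 1 + b * Real.exp (2 * y))
    (w : ℝ × ℝ → ℝ)
    (hdiff : ∀ p ∈ I ×ˢ J, DifferentiableAt ℝ w p)
    (hx : ∀ x ∈ I, ∀ y ∈ J, deriv (fun t => w (t, y)) x =
      w (x, y) + Real.sqrt ((1 + b * Real.exp (2 * y)) / (1 + a * Real.exp (2 * x))))
    (hy : ∀ x ∈ I, ∀ y ∈ J, deriv (fun s => w (x, s)) y =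
      w (x, y) + Real.sqrt ((1 + a * Real.exp (2 * x)) / (1 + b * Real.exp (2 * y)))) :
    ∃ η : ℝ, ∀ x ∈ I, ∀ y ∈ J,
      w (x, y) = -Real.sqrt ((1 + a * Real.exp (2 * x)) * (1 + b * Real.exp (2 * y)))
        + η * Real.exp (x + y) := by
  classical
  set g : ℝ × ℝ → ℝ := fun p =>
    (w p + Real.sqrt (1 + a * Real.exp (2 * p.1)) * Real.sqrt (1 + b * Real.exp (2 * p.2)))
      * Real.exp (-(p.1 + p.2)) with hg
  -- x-partial of g vanishes
  have keyx : ∀ y ∈ J, ∀ x ∈ I, HasDerivAt (fun t => g (t, y)) 0 x := by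
    intro y hyJ x hxI
    have hA := ha x hxI
    have hB := hb y hyJ
    set A := 1 + a * Real.exp (2 * x) with hAdef
    set B := 1 + b * Real.exp (2 * y) with hBdef
    set sA := Real.sqrt A with hsAdef
    set sB := Real.sqrt B with hsBdef
    have hsA : 0 < sA := Real.sqrt_pos.mpr hA
    have hsB : (0:ℝ) ≤ sB := Real.sqrt_nonneg _
    have hwdiff : DifferentiableAt ℝ (fun t => w (t, y)) x :=
      (hdiff (x, y) ⟨hxI, hyJ⟩).comp x (differentiableAt_id.prodMk (differentiableAt_const y))
    have hw : HasDerivAt (fun t => w (t, y)) (w (x, y) + Real.sqrt (B / A)) x := by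
      have := hwdiff.hasDerivAt
      rwa [hx x hxI y hyJ] at this
    have hsAderiv : HasDerivAt (fun t => Real.sqrt (1 + a * Real.exp (2 * t)))
        (a * Real.exp (2 * x) / sA) x := hasDerivAt_sqrt_one_add_exp a x hA
    have hsum : HasDerivAt
        (fun t => w (t, y) + Real.sqrt (1 + a * Real.exp (2 * t)) * sB)
        (w (x, y) + Real.sqrt (B / A) + (a * Real.exp (2 * x) / sA) * sB) x :=
      hw.add (hsAderiv.mul_const sB)
    have hexp : HasDerivAt (fun t => Real.exp (-(t + y))) (-Real.exp (-(x + y))) x := by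
      have hlin : HasDerivAt (fun t : ℝ => -(t + y)) (-1) x := ((hasDerivAt_id x).add_const y).neg
      have h := (Real.hasDerivAt_exp (-(x + y))).comp x hlin
      rw [mul_neg_one] at h
      exact h
    have htot := hsum.mul hexp
    have hkey : Real.sqrt (B / A) + (a * Real.exp (2 * x) / sA) * sB = sA * sB := by
      rw [Real.sqrt_div' B hA.le, ← hsAdef, ← hsBdef]
      have hsq : sA ^ 2 = A := Real.sq_sqrt hA.le
      field_simp
      nlinarith [hsq]
    have hval : (w (x, y) + Real.sqrt (B / A) + (a * Real.exp (2 * x) / sA) * sB)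
        * Real.exp (-(x + y)) + (w (x, y) + sA * sB) * (-Real.exp (-(x + y))) = 0 := by
      rw [show w (x, y) + Real.sqrt (B / A) + (a * Real.exp (2 * x) / sA) * sB
          = w (x, y) + (Real.sqrt (B / A) + (a * Real.exp (2 * x) / sA) * sB) by ring, hkey]
      ring
    have : HasDerivAt (fun t =>
        (w (t, y) + Real.sqrt (1 + a * Real.exp (2 * t)) * sB) * Real.exp (-(t + y))) 0 x := by
      rw [← hval]; exact htot
    exact this
  -- y-partial of g vanishes
  have keyy : ∀ x ∈ I, ∀ y ∈ J, HasDerivAt (fun s => g (x, s)) 0 y := by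
    intro x hxI y hyJ
    have hA := ha x hxI
    have hB := hb y hyJ
    set A := 1 + a * Real.exp (2 * x) with hAdef
    set B := 1 + b * Real.exp (2 * y) with hBdef
    set sA := Real.sqrt A with hsAdef
    set sB := Real.sqrt B with hsBdef
    have hsB : 0 < sB := Real.sqrt_pos.mpr hB
    have hsA : (0:ℝ) ≤ sA := Real.sqrt_nonneg _
    have hwdiff : DifferentiableAt ℝ (fun s => w (x, s)) y :=
      (hdiff (x, y) ⟨hxI, hyJ⟩).comp y ((differentiableAt_const x).prodMk differentiableAt_id)
    have hw : HasDerivAt (fun s => w (x, s)) (w (x, y) + Real.sqrt (A / B)) y := by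
      have := hwdiff.hasDerivAt
      rwa [hy x hxI y hyJ] at this
    have hsBderiv : HasDerivAt (fun s => Real.sqrt (1 + b * Real.exp (2 * s)))
        (b * Real.exp (2 * y) / sB) y := hasDerivAt_sqrt_one_add_exp b y hB
    have hsum : HasDerivAt
        (fun s => w (x, s) + sA * Real.sqrt (1 + b * Real.exp (2 * s)))
        (w (x, y) + Real.sqrt (A / B) + sA * (b * Real.exp (2 * y) / sB)) y :=
      hw.add (hsBderiv.const_mul sA)
    have hexp : HasDerivAt (fun s => Real.exp (-(x + s))) (-Real.exp (-(x + y))) y := by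
      have hlin : HasDerivAt (fun s : ℝ => -(x + s)) (-1) y :=
        (((hasDerivAt_id y).const_add x)).neg
      have h := (Real.hasDerivAt_exp (-(x + y))).comp y hlin
      rw [mul_neg_one] at h
      exact h
    have htot := hsum.mul hexp
    have hkey : Real.sqrt (A / B) + sA * (b * Real.exp (2 * y) / sB) = sA * sB := by
      rw [Real.sqrt_div' A hB.le, ← hsAdef, ← hsBdef]
      have hsq : sB ^ 2 = B := Real.sq_sqrt hB.le
      field_simp
      nlinarith [hsq]
    have hval : (w (x, y) + Real.sqrt (A / B) + sA * (b * Real.exp (2 * y) / sB))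
        * Real.exp (-(x + y)) + (w (x, y) + sA * sB) * (-Real.exp (-(x + y))) = 0 := by
      rw [show w (x, y) + Real.sqrt (A / B) + sA * (b * Real.exp (2 * y) / sB)
          = w (x, y) + (Real.sqrt (A / B) + sA * (b * Real.exp (2 * y) / sB)) by ring, hkey]
      ring
    have : HasDerivAt (fun s =>
        (w (x, s) + sA * Real.sqrt (1 + b * Real.exp (2 * s))) * Real.exp (-(x + s))) 0 y := by
      rw [← hval]; exact htot
    exact this
  -- constancy on convex sets
  have hIconv : Convex ℝ I := convex_iff_ordConnected.mpr hIconn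
  have hJconv : Convex ℝ J := convex_iff_ordConnected.mpr hJconn
  have const1d : ∀ (s : Set ℝ) (f : ℝ → ℝ), Convex ℝ s → IsOpen s →
      (∀ u ∈ s, HasDerivAt f 0 u) → ∀ u ∈ s, ∀ v ∈ s, f u = f v := by
    intro s f hsconv hsopen hd u hu v hv
    refine hsconv.is_const_of_fderivWithin_eq_zero
      (fun z hz => ((hd z hz).differentiableAt).differentiableWithinAt) ?_ hu hv
    intro z hz
    have h0 : fderiv ℝ f z = 0 := by
      rw [(hd z hz).hasFDerivAt.fderiv]
      ext
      simp
    rw [fderivWithin_of_isOpen hsopen hz, h0]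
  -- conclude
  by_cases hne : (I ×ˢ J).Nonempty
  · obtain ⟨⟨x₀, y₀⟩, hx₀, hy₀⟩ := hne
    refine ⟨g (x₀, y₀), ?_⟩
    intro x hxI y hyJ
    have h1 : g (x, y) = g (x₀, y) :=
      const1d I (fun t => g (t, y)) hIconv hIopen (keyx y hyJ) x hxI x₀ hx₀
    have h2 : g (x₀, y) = g (x₀, y₀) :=
      const1d J (fun s => g (x₀, s)) hJconv hJopen (keyy x₀ hx₀) y hyJ y₀ hy₀
    have hgval : g (x, y) = g (x₀, y₀) := h1.trans h2
    have hA := ha x hxI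
    have hB := hb y hyJ
    have hmul : Real.sqrt ((1 + a * Real.exp (2 * x)) * (1 + b * Real.exp (2 * y)))
        = Real.sqrt (1 + a * Real.exp (2 * x)) * Real.sqrt (1 + b * Real.exp (2 * y)) :=
      Real.sqrt_mul hA.le _
    have hgeq : (w (x, y) + Real.sqrt (1 + a * Real.exp (2 * x))
        * Real.sqrt (1 + b * Real.exp (2 * y))) * Real.exp (-(x + y)) = g (x₀, y₀) := hgval
    have hexppos : (0:ℝ) < Real.exp (-(x + y)) := Real.exp_pos _
    rw [hmul]
    have hinv : Real.exp (-(x + y)) * Real.exp (x + y) = 1 := by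
      rw [← Real.exp_add, show -(x + y) + (x + y) = 0 by ring, Real.exp_zero]
    linear_combination Real.exp (x + y) * hgeq
      - (w (x, y) + Real.sqrt (1 + a * Real.exp (2 * x))
          * Real.sqrt (1 + b * Real.exp (2 * y))) * hinv
  · refine ⟨0, ?_⟩
    intro x hxI y hyJ
    exact absurd (Set.mk_mem_prod hxI hyJ) (fun h => hne ⟨(x, y), h⟩)
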